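/- Any finite connected graph that admits a Hamilton path is stackable, i.e., for every vertex t, starting from one cup on each vertex of G, there is a sequence of legal stacking moves that stacks all cups onto t. -/

import Mathlib

/-- A legal cup-stacking move in the graph `G`: all `r` cups on `x` are moved to a
vertex `y ≠ x` carrying at least one cup, provided the graph distance `d(x,y) = r`. -/
def CupStep {V : Type*} [DecidableEq V] (G : SimpleGraph V) (c c' : V → ℕ) : Prop :=
  ∃ x y : V, x ≠ y ∧ 0 < c x ∧ 0 < c y ∧ G.dist x y = c x ∧
    c' = Function.update (Function.update c x 0) y (c y + c x)

/-- `G` is `t`-stackable: starting from one cup on each vertex, some sequence of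
legal moves stacks all cups onto `t`. -/
def TStackable {V : Type*} [DecidableEq V] (G : SimpleGraph V) (t : V) : Prop :=
  ∃ c : V → ℕ, Relation.ReflTransGen (CupStep G) (fun _ => 1) c ∧ ∀ v, v ≠ t → c v = 0

section Aux

variable {V : Type*} [DecidableEq V] (G : SimpleGraph V)

/-- A reverse step: split `r` cups from the stack at `y` onto an empty vertex `x`
at distance `r`. -/
lemma rev_split (c : V → ℕ) (x y : V) (r : ℕ) (hxy : x ≠ y) (hr : 0 < r)
    (hd : G.dist x y = r) (hx : c x = 0) (hy : r < c y) :
    CupStep G (Function.update (Function.update c x r) y (c y - r)) c := by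
  refine ⟨x, y, hxy, ?_, ?_, ?_, ?_⟩
  · simpa [Function.update_of_ne hxy] using hr
  · simp only [Function.update_self]; omega
  · simpa [Function.update_of_ne hxy] using hd
  · funext v
    rcases eq_or_ne v y with rfl | hvy
    · simp [Function.update_of_ne hxy, Function.update_of_ne (Ne.symm hxy)]
      omega
    · rcases eq_or_ne v x with rfl | hvx
      · simp [Function.update_of_ne hxy, Function.update_of_ne hvy, hx]
      · simp [Function.update_of_ne hvy, Function.update_of_ne hvx]

omit [DecidableEq V] in
/-- Along a chain of adjacent vertices, the distance from the head to the last
element is at most the length. -/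
lemma dist_head_last (hG : G.Connected) :
    ∀ (l : List V) (x : V), List.Chain' G.Adj (x :: l) → ∀ (hne : l ≠ []),
      G.dist x (l.getLast hne) ≤ l.length := by
  intro l
  induction l with
  | nil => intro x _ hne; exact absurd rfl hne
  | cons a l ih =>
    intro x h hne
    have hadj : G.Adj x a := (List.isChain_cons_cons.mp h).1
    have hxa : G.dist x a = 1 := SimpleGraph.dist_eq_one_iff_adj.mpr hadj
    rcases eq_or_ne l [] with rfl | hl
    · simpa [List.getLast] using le_of_eq hxa
    · have h' : List.Chain' G.Adj (a :: l) := (List.isChain_cons_cons.mp h).2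
      have hrec := ih a h' hl
      have hgl : (a :: l).getLast hne = l.getLast hl := List.getLast_cons hl
      rw [hgl]
      calc G.dist x (l.getLast hl) ≤ G.dist x a + G.dist a (l.getLast hl) :=
            hG.dist_triangle
        _ ≤ 1 + l.length := by omega
        _ = (a :: l).length := by simp [Nat.add_comm]

/-- The spreading lemma: a stack of more than `m` cups at `y` can distribute one
cup to each vertex of an empty chain of length `m` hanging off `y`. -/
lemma spread (hG : G.Connected) :
    ∀ (m : ℕ) (L : List V) (y : V) (c : V → ℕ),
      L.length = m → List.Chain' G.Adj (y :: L) → (y :: L).Nodup →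
      m + 1 ≤ c y → (∀ p ∈ L, c p = 0) →
      ∃ c', Relation.ReflTransGen (Function.swap (CupStep G)) c c' ∧
        c' y = c y - m ∧ (∀ p ∈ L, c' p = 1) ∧ ∀ v, v ∉ y :: L → c' v = c v := by
  intro m
  induction m using Nat.strong_induction_on with
  | _ m IH =>
  intro L y c hlen hchain hnodup hs hempty
  rcases Nat.eq_zero_or_pos m with hm | hm
  · have : L = [] := List.length_eq_zero_iff.mp (by omega)
    subst this
    exact ⟨c, Relation.ReflTransGen.refl, by omega, by simp, fun v _ => rfl⟩
  have hL0 : L ≠ [] := by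
    intro h; rw [h] at hlen; simp at hlen; omega
  set pm := L.getLast hL0 with hpm
  have hpmL : pm ∈ L := List.getLast_mem hL0
  have hyL : y ∉ L := (List.nodup_cons.mp hnodup).1
  have hLnd : L.Nodup := (List.nodup_cons.mp hnodup).2
  have hypm : y ≠ pm := fun h => hyL (h ▸ hpmL)
  set d := G.dist y pm with hd
  have hd1 : 1 ≤ d := hG.pos_dist_of_ne hypm
  have hdm : d ≤ m := by
    have h := dist_head_last G hG L y hchain hL0
    rw [← hpm] at h
    omega
  -- decompose L = A ++ B ++ [pm]
  set K := L.dropLast with hK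
  have hKpm : K ++ [pm] = L := List.dropLast_append_getLast hL0
  have hKlen : K.length = m - 1 := by
    have : K.length + 1 = m := by
      have := congrArg List.length hKpm
      simpa [hlen] using this
    omega
  set A := K.take (m - d) with hA
  set B := K.drop (m - d) with hB
  have hAB : A ++ B = K := List.take_append_drop _ _
  have hAlen : A.length = m - d := by
    rw [hA, List.length_take]; omega
  have hBlen : B.length = d - 1 := by
    rw [hB, List.length_drop]; omega
  have hLdec : L = A ++ (B ++ [pm]) := by
    rw [← List.append_assoc, hAB, hKpm]
  -- sublist facts
  have hAsub : A.Sublist L := by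
    refine (List.take_sublist _ K).trans ?_
    rw [hK]; exact List.dropLast_sublist L
  have hBpmsub : (B ++ [pm]).Sublist L := by
    rw [hLdec]; exact List.sublist_append_right _ _
  -- membership facts from nodup
  have hLnd' : (A ++ (B ++ [pm])).Nodup := hLdec ▸ hLnd
  have hdisj : A.Disjoint (B ++ [pm]) := List.disjoint_of_nodup_append hLnd'
  have hpmB : pm ∉ B := by
    have h1 : (B ++ [pm]).Nodup := hLnd.sublist hBpmsub
    rw [List.nodup_append] at h1
    intro hmem
    exact h1.2.2 pm hmem pm (by simp) rfl
  -- chain facts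
  have hchainA : List.Chain' G.Adj (y :: A) := by
    refine hchain.prefix ?_
    rw [List.cons_prefix_cons]
    exact ⟨rfl, by rw [hLdec]; exact ⟨B ++ [pm], rfl⟩⟩
  have hchainRev : List.Chain' G.Adj (pm :: B.reverse) := by
    have h1 : List.Chain' G.Adj (B ++ [pm]) := by
      refine hchain.suffix ?_
      refine List.IsSuffix.trans ?_ (List.suffix_cons y L)
      rw [hLdec]; exact ⟨A, rfl⟩
    have h2 : List.Chain' (flip G.Adj) (B ++ [pm]) := h1.imp (fun a b hab => hab.symm)
    have h3 : List.Chain' G.Adj ((B ++ [pm]).reverse) := List.isChain_reverse.mpr h2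
    simpa using h3
  -- nodup facts
  have hnodupA : (y :: A).Nodup := by
    refine List.Nodup.sublist ?_ hnodup
    exact List.Sublist.cons₂ y hAsub
  have hnodupRev : (pm :: B.reverse).Nodup := by
    have h1 : (B ++ [pm]).Nodup := hLnd.sublist hBpmsub
    have h2 : ((B ++ [pm]).reverse).Nodup := List.nodup_reverse.mpr h1
    simpa using h2
  -- the first reverse move: split d cups from y onto pm
  set c1 : V → ℕ := Function.update (Function.update c pm d) y (c y - d) with hc1
  have step1 : CupStep G c1 c := by
    refine rev_split G c pm y d (Ne.symm hypm) (by omega) ?_ (hempty pm hpmL) (by omega)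
    rw [SimpleGraph.dist_comm]
  have hc1pm : c1 pm = d := by
    rw [hc1, Function.update_of_ne (Ne.symm hypm), Function.update_self]
  have hc1y : c1 y = c y - d := by rw [hc1, Function.update_self]
  have hc1other : ∀ v, v ≠ pm → v ≠ y → c1 v = c v := by
    intro v h1 h2
    rw [hc1, Function.update_of_ne h2, Function.update_of_ne h1]
  -- IH call 1: spread d-1 cups from pm back along B.reverse
  have hBd : B.reverse.length = d - 1 := by simpa using hBlen
  obtain ⟨c2, hrtg2, hc2pm, hc2B, hc2out⟩ :=
    IH (d - 1) (by omega) B.reverse pm c1 hBd hchainRev hnodupRev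
      (by omega)
      (by
        intro p hp
        rw [List.mem_reverse] at hp
        have hpy : p ≠ y := fun h => hyL (h ▸ hLdec ▸ (by
          exact List.mem_append.mpr (Or.inr (List.mem_append.mpr (Or.inl hp)))))
        have hppm : p ≠ pm := fun h => hpmB (h ▸ hp)
        rw [hc1other p hppm hpy]
        exact hempty p (hLdec ▸ List.mem_append.mpr (Or.inr (List.mem_append.mpr (Or.inl hp)))))
  have hyout : y ∉ pm :: B.reverse := by
    simp only [List.mem_cons, List.mem_reverse]
    rintro (h | h)
    · exact hypm h
    · exact hyL (hLdec ▸ List.mem_append.mpr (Or.inr (List.mem_append.mpr (Or.inl h))))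
  have hc2y : c2 y = c y - d := by rw [hc2out y hyout, hc1y]
  -- IH call 2: spread m-d cups from y along A
  obtain ⟨c3, hrtg3, hc3y, hc3A, hc3out⟩ :=
    IH (m - d) (by omega) A y c2 hAlen hchainA hnodupA
      (by omega)
      (by
        intro p hp
        have hpBpm : p ∉ B ++ [pm] := fun h => hdisj hp h
        have hppm : p ≠ pm := fun h => hpBpm (h ▸ by simp)
        have hpB : p ∉ B.reverse := by
          rw [List.mem_reverse]; intro h; exact hpBpm (List.mem_append.mpr (Or.inl h))
        have hpy : p ≠ y := fun h => hyL (h ▸ hLdec ▸ List.mem_append.mpr (Or.inl hp))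
        rw [hc2out p (by simp only [List.mem_cons]; tauto), hc1other p hppm hpy]
        exact hempty p (hLdec ▸ List.mem_append.mpr (Or.inl hp)))
  refine ⟨c3, ?_, ?_, ?_, ?_⟩
  · exact (Relation.ReflTransGen.single (show Function.swap (CupStep G) c c1 from step1)).trans (hrtg2.trans hrtg3)
  · rw [hc3y, hc2y]; omega
  · intro p hp
    rw [hLdec] at hp
    rcases List.mem_append.mp hp with hpA | hpBpm
    · exact hc3A p hpA
    · have hpy : p ≠ y := fun h => hyL (h ▸ hLdec ▸ List.mem_append.mpr (Or.inr hpBpm))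
      have hpA : p ∉ A := fun h => hdisj h hpBpm
      have h3 : c3 p = c2 p := hc3out p (by simp only [List.mem_cons]; tauto)
      rcases List.mem_append.mp hpBpm with hpB | hppm
      · rw [h3]; exact hc2B p (List.mem_reverse.mpr hpB)
      · have : p = pm := by simpa using hppm
        subst this
        rw [h3]; omega
  · intro v hv
    simp only [List.mem_cons] at hv
    push_neg at hv
    obtain ⟨hvy, hvL⟩ := hv
    have hvA : v ∉ A := fun h => hvL (hLdec ▸ List.mem_append.mpr (Or.inl h))
    have hvB : v ∉ B.reverse := by
      rw [List.mem_reverse]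
      exact fun h => hvL (hLdec ▸ List.mem_append.mpr (Or.inr (List.mem_append.mpr (Or.inl h))))
    have hvpm : v ≠ pm := fun h => hvL (h ▸ hpmL)
    rw [hc3out v (by simp only [List.mem_cons]; tauto),
      hc2out v (by simp only [List.mem_cons]; tauto), hc1other v hvpm hvy]

end Aux

theorem hamilton_path_implies_stackable {V : Type*} [Fintype V] [DecidableEq V]
    (G : SimpleGraph V) (hG : G.Connected)
    (hham : ∃ (a b : V) (P : G.Walk a b), P.IsPath ∧ ∀ v : V, v ∈ P.support) :
    ∀ t : V, TStackable G t := by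
  intro t
  obtain ⟨a, b, P, hP, hsupp⟩ := hham
  set S := P.support with hS
  have hchain : List.Chain' G.Adj S := P.isChain_adj_support
  have hnodup : S.Nodup := hP.support_nodup
  have htS : t ∈ S := hsupp t
  obtain ⟨S1, S2, hdec⟩ := List.append_of_mem htS
  -- the reverse starting configuration: everything stacked at t
  set M := S.length with hM
  have hMeq : M = S1.length + S2.length + 1 := by
    rw [hM, hdec]; simp; omega
  set c0 : V → ℕ := fun v => if v = t then M else 0 with hc0
  -- nodup components
  have hnd : (S1 ++ t :: S2).Nodup := hdec ▸ hnodup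
  have htS1 : t ∉ S1 := by
    intro h
    exact (List.disjoint_of_nodup_append hnd) h (by simp)
  have htS2 : t ∉ S2 := by
    have := (List.nodup_append.mp hnd).2.1
    exact (List.nodup_cons.mp this).1
  have hdisj12 : S1.Disjoint S2 := by
    intro x h1 h2
    exact (List.disjoint_of_nodup_append hnd) h1 (by simp [h2])
  -- right chain t :: S2
  have hchainR : List.Chain' G.Adj (t :: S2) := by
    refine hchain.suffix ?_
    rw [hdec]; exact ⟨S1, rfl⟩
  have hnodupR : (t :: S2).Nodup := by
    refine hnodup.sublist ?_
    rw [hdec]; exact List.sublist_append_right _ _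
  -- left chain t :: S1.reverse
  have hchainL : List.Chain' G.Adj (t :: S1.reverse) := by
    have h1 : List.Chain' G.Adj (S1 ++ [t]) := by
      refine hchain.prefix ?_
      rw [hdec]
      exact ⟨S2, by simp⟩
    have h2 : List.Chain' (flip G.Adj) (S1 ++ [t]) := h1.imp (fun a b hab => hab.symm)
    have h3 : List.Chain' G.Adj ((S1 ++ [t]).reverse) := List.isChain_reverse.mpr h2
    simpa using h3
  have hnodupL : (t :: S1.reverse).Nodup := by
    have h1 : (S1 ++ [t]).Nodup := by
      refine hnodup.sublist ?_
      rw [hdec]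
      have : (t :: S2).Sublist (t :: S2) := List.Sublist.refl _
      exact List.Sublist.append (List.Sublist.refl S1) (by simp)
    have h2 : ((S1 ++ [t]).reverse).Nodup := List.nodup_reverse.mpr h1
    simpa using h2
  -- spread along the right chain
  obtain ⟨c1, hrtg1, hc1t, hc1S2, hc1out⟩ :=
    spread G hG S2.length S2 t c0 rfl hchainR hnodupR
      (by simp only [hc0, if_pos rfl]; omega)
      (by intro p hp; simp only [hc0]; rw [if_neg (fun h => htS2 (by rw [← h]; exact hp))])
  have hc1t' : c1 t = S1.length + 1 := by
    rw [hc1t]; simp only [hc0, if_pos rfl]; omega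
  -- spread along the left chain
  obtain ⟨c2, hrtg2, hc2t, hc2S1, hc2out⟩ :=
    spread G hG S1.reverse.length S1.reverse t c1 rfl hchainL hnodupL
      (by rw [hc1t']; simp)
      (by
        intro p hp
        rw [List.mem_reverse] at hp
        have hpt : p ≠ t := fun h => htS1 (h ▸ hp)
        have hpS2 : p ∉ S2 := fun h => hdisj12 hp h
        rw [hc1out p (by simp only [List.mem_cons]; tauto)]
        simp only [hc0]; rw [if_neg hpt])
  -- c2 is the all-ones configuration
  have hc2 : c2 = (fun _ => (1 : ℕ)) := by
    funext v
    have hvS : v ∈ S1 ++ t :: S2 := hdec ▸ hsupp v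
    rcases List.mem_append.mp hvS with hv1 | hv2
    · exact hc2S1 v (List.mem_reverse.mpr hv1)
    · rcases List.mem_cons.mp hv2 with rfl | hv2'
      · rw [hc2t, hc1t']; simp
      · have hvt : v ≠ t := by rintro rfl; exact htS2 hv2'
        have hvS1 : v ∉ S1.reverse := by
          rw [List.mem_reverse]; exact fun h => hdisj12 h hv2'
        rw [hc2out v (by simp only [List.mem_cons]; tauto)]
        exact hc1S2 v hv2'
  -- convert the reverse chain into a forward chain
  have hrtg : Relation.ReflTransGen (Function.swap (CupStep G)) c0 c2 := hrtg1.trans hrtg2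
  have hfwd : Relation.ReflTransGen (CupStep G) c2 c0 :=
    Relation.reflTransGen_swap.mp hrtg
  refine ⟨c0, ?_, ?_⟩
  · rw [← hc2]; exact hfwd
  · intro v hv
    simp only [hc0]; rw [if_neg hv]
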